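/- arXiv:1406.5611 — 3 statements merged into one kernel-verified Lean document; each statement's English description precedes it below -/
import Mathlib

section
/- Let p ≥ 5 be a prime, let r be a nonzero integer relatively prime to p, let r̄ be a multiplicative inverse of r modulo p, and let s be an integer with 0 ≤ s ≤ p−1. If −24(1+s)·r̄ + 1 is congruent to 0 modulo p or is a quadratic nonresidue modulo p, then p−1 ∉ S*(p,r,s); equivalently, p−1 ∈ T*(p,r,s). -/
/-- The set `S*(p,r,s)`: residues `j`, `0 ≤ j ≤ p-1`, such that
`(1/2)·r·n(3n-1) ≡ j - s (mod p)` for some integer `n` (stated as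
`r·n·(3n-1) ≡ 2(j-s) (mod p)`, which is equivalent since `p` is odd) and
`24(j-s) ≢ -r (mod p)`. -/
def Sstar (p : ℕ) (r s : ℤ) : Set ℤ :=
  {j | 0 ≤ j ∧ j ≤ (p : ℤ) - 1 ∧
    (∃ n : ℤ, r * n * (3 * n - 1) ≡ 2 * (j - s) [ZMOD (p : ℤ)]) ∧
    ¬(24 * (j - s) ≡ -r [ZMOD (p : ℤ)])}

/-- The set `T*(p,r,s)`: residues `k`, `0 ≤ k ≤ p-1`, larger than every element of
`S*(p,r,s)`. -/
def Tstar (p : ℕ) (r s : ℤ) : Set ℤ :=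
  {k | 0 ≤ k ∧ k ≤ (p : ℤ) - 1 ∧ ∀ j ∈ Sstar p r s, j < k}

/-- Let `p ≥ 5` be prime, `r` a nonzero integer coprime to `p` with inverse `r̄` mod `p`,
and `0 ≤ s ≤ p-1`.  If the Legendre symbol `(-24(1+s)r̄+1 / p)` is `0` or `-1`, then
`p-1 ∉ S*(p,r,s)`; equivalently, `p-1 ∈ T*(p,r,s)`. -/
theorem pm1_mem_Tstar (p : ℕ) [Fact p.Prime] (hp5 : 5 ≤ p) (r : ℤ) (hr : r ≠ 0)
    (hrp : IsCoprime r (p : ℤ)) (rbar : ℤ) (hrbar : r * rbar ≡ 1 [ZMOD (p : ℤ)])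
    (s : ℕ) (hs : (s : ℤ) ≤ (p : ℤ) - 1)
    (hleg : legendreSym p (-24 * (1 + (s : ℤ)) * rbar + 1) = 0 ∨
            legendreSym p (-24 * (1 + (s : ℤ)) * rbar + 1) = -1) :
    (p : ℤ) - 1 ∉ Sstar p r (s : ℤ) ∧ (p : ℤ) - 1 ∈ Tstar p r (s : ℤ) := by
  have hp0 : ((p : ℕ) : ZMod p) = 0 := ZMod.natCast_self p
  have hrb : ((r : ℤ) : ZMod p) * ((rbar : ℤ) : ZMod p) = 1 := by
    have := (ZMod.intCast_eq_intCast_iff _ _ p).mpr hrbar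
    push_cast at this; simpa using this
  have hnot : (p : ℤ) - 1 ∉ Sstar p r (s : ℤ) := by
    rintro ⟨h0, h1, ⟨n, hn⟩, hne⟩
    have hn' := (ZMod.intCast_eq_intCast_iff _ _ p).mpr hn
    push_cast at hn'
    have hx : ((6 * n - 1 : ℤ) : ZMod p) ^ 2
        = ((-24 * (1 + (s : ℤ)) * rbar + 1 : ℤ) : ZMod p) := by
      push_cast
      linear_combination (12 * (rbar : ZMod p)) * hn'
        - (12 * (n : ZMod p) * (3 * (n : ZMod p) - 1)) * hrb
        + (24 * (rbar : ZMod p)) * hp0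
    rcases hleg with h | h
    · have hz : ((-24 * (1 + (s : ℤ)) * rbar + 1 : ℤ) : ZMod p) = 0 :=
        (legendreSym.eq_zero_iff p _).mp h
      apply hne
      rw [← ZMod.intCast_eq_intCast_iff]
      push_cast
      push_cast at hz
      linear_combination (r : ZMod p) * hz + (24 * (1 + (s : ZMod p))) * hrb
        + 24 * hp0
    · exact (legendreSym.eq_neg_one_iff p).mp h
        ⟨((6 * n - 1 : ℤ) : ZMod p), by rw [← hx]; ring⟩
  have hp1 : (1 : ℤ) ≤ (p : ℤ) := by exact_mod_cast (by omega : 1 ≤ p)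
  refine ⟨hnot, ⟨by linarith, le_refl _, fun j hj => ?_⟩⟩
  exact lt_of_le_of_ne hj.2.1 (fun h => hnot (h ▸ hj))
end

section
/- Let p be a prime, let j be an integer with 0 ≤ j ≤ p−1, and let k, M, N be integers with 0 ≤ k ≤ M−1 ≤ N−1. Then α(p,N,j,k) = α(p,M,j,k). -/
/-- The polynomial `F(q,N) = ∑_{n=0}^N (q;q)_n`. -/
noncomputable def Fpoly (N : ℕ) : Polynomial ℤ :=
  ∑ n ∈ Finset.range (N + 1), ∏ j ∈ Finset.Icc 1 n, (1 - Polynomial.X ^ j)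

/-- The polynomial `A_p(N,i,q)` of the `p`-dissection
`F(q,N) = ∑_{i=0}^{p-1} q^i A_p(N,i,q^p)`; its `k`-th coefficient is the coefficient of
`q^{pk+i}` in `F(q,N)` (which vanishes for `k > N(N+1)/2` since `deg F(q,N) ≤ N(N+1)/2`). -/
noncomputable def Apoly (p N i : ℕ) : Polynomial ℤ :=
  ∑ k ∈ Finset.range (N * (N + 1) / 2 + 1),
    Polynomial.C ((Fpoly N).coeff (p * k + i)) * Polynomial.X ^ k

/-- `α(p,n,i,k)`: the coefficient of `q^k` in the polynomial `A_p(pn-1, i, 1-q)`. -/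
noncomputable def alphaCoeff (p n i k : ℕ) : ℤ :=
  ((Apoly p (p * n - 1) i).comp (1 - Polynomial.X)).coeff k

open Polynomial Finset

lemma sum_Icc_id_mul_two (n : ℕ) : (∑ j ∈ Finset.Icc 1 n, j) * 2 = n * (n + 1) := by
  induction n with
  | zero => simp
  | succ n ih =>
    rw [Finset.sum_Icc_succ_top (by omega)]
    nlinarith [ih]

lemma natDegree_Fpoly_le (N : ℕ) : (Fpoly N).natDegree ≤ N * (N + 1) / 2 := by
  apply Polynomial.natDegree_sum_le_of_forall_le
  intro n hn
  simp only [Finset.mem_range] at hn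
  calc (∏ j ∈ Finset.Icc 1 n, (1 - Polynomial.X ^ j : Polynomial ℤ)).natDegree
      ≤ ∑ j ∈ Finset.Icc 1 n, (1 - Polynomial.X ^ j : Polynomial ℤ).natDegree :=
        Polynomial.natDegree_prod_le _ _
    _ ≤ ∑ j ∈ Finset.Icc 1 n, j := Finset.sum_le_sum (fun j _ =>
        le_trans (Polynomial.natDegree_sub_le _ _) (by simp))
    _ ≤ N * (N + 1) / 2 := by
        rw [Nat.le_div_iff_mul_le (by norm_num), sum_Icc_id_mul_two]
        exact Nat.mul_le_mul (by omega) (by omega)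

/-- coefficient of a polynomial written as `∑ C (f l) * X ^ l`. -/
lemma coeff_sum_C_mul_X (f : ℕ → ℤ) (D k : ℕ) (h : ∀ m, D < m → f m = 0) :
    (∑ l ∈ Finset.range (D + 1), Polynomial.C (f l) * Polynomial.X ^ l).coeff k = f k := by
  rw [Polynomial.finset_sum_coeff]
  simp only [Polynomial.coeff_C_mul, Polynomial.coeff_X_pow, mul_ite, mul_one, mul_zero]
  rw [Finset.sum_ite_eq (Finset.range (D + 1)) k f]
  split_ifs with hk
  · rfl
  · exact (h k (by simp only [Finset.mem_range] at hk; omega)).symm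

lemma coeff_Apoly (p N i k : ℕ) (hp : 1 ≤ p) :
    (Apoly p N i).coeff k = (Fpoly N).coeff (p * k + i) := by
  unfold Apoly
  apply coeff_sum_C_mul_X
  intro m hm
  apply Polynomial.coeff_eq_zero_of_natDegree_lt
  have h1 := natDegree_Fpoly_le N
  have h2 : m ≤ p * m + i := by nlinarith
  omega

/-- the `j`-th `p`-dissection component of a polynomial. -/
noncomputable def Epart (p j : ℕ) (P : Polynomial ℤ) : Polynomial ℤ :=
  ∑ l ∈ Finset.range (P.natDegree + 1), Polynomial.C (P.coeff (p * l + j)) * Polynomial.X ^ l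

lemma coeff_Epart (p j : ℕ) (P : Polynomial ℤ) (k : ℕ) (hp : 1 ≤ p) :
    (Epart p j P).coeff k = P.coeff (p * k + j) := by
  unfold Epart
  apply coeff_sum_C_mul_X
  intro m hm
  apply Polynomial.coeff_eq_zero_of_natDegree_lt
  have h2 : m ≤ p * m + j := by nlinarith
  omega

lemma coeff_expand_mul (p j : ℕ) (hp : 1 ≤ p) (hj : j < p) (H T : Polynomial ℤ) (k : ℕ) :
    ((Polynomial.expand ℤ p H) * T).coeff (p * k + j)
      = (H * Epart p j T).coeff k := by
  rw [Polynomial.coeff_mul, Polynomial.coeff_mul,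
    Finset.Nat.sum_antidiagonal_eq_sum_range_succ_mk,
    Finset.Nat.sum_antidiagonal_eq_sum_range_succ_mk]
  simp only [Polynomial.coeff_expand (by omega : 0 < p), ite_mul, zero_mul]
  rw [← Finset.sum_filter]
  refine Finset.sum_bij' (fun i _ => i / p) (fun m _ => p * m) ?_ ?_ ?_ ?_ ?_
  · intro i hi
    simp only [Finset.mem_filter, Finset.mem_range, Nat.succ_eq_add_one] at hi ⊢
    obtain ⟨hi1, c, rfl⟩ := hi
    have : c ≤ k := by nlinarith
    rw [Nat.mul_div_cancel_left _ (by omega : 0 < p)]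
    omega
  · intro m hm
    simp only [Finset.mem_filter, Finset.mem_range, Nat.succ_eq_add_one] at hm ⊢
    constructor
    · nlinarith
    · exact ⟨m, rfl⟩
  · intro i hi
    simp only [Finset.mem_filter] at hi
    obtain ⟨_, c, rfl⟩ := hi
    rw [Nat.mul_div_cancel_left _ (by omega : 0 < p)]
  · intro m hm
    rw [Nat.mul_div_cancel_left _ (by omega : 0 < p)]
  · intro i hi
    simp only [Finset.mem_filter, Finset.mem_range, Nat.succ_eq_add_one] at hi
    obtain ⟨hi1, c, rfl⟩ := hi
    rw [Nat.mul_div_cancel_left _ (by omega : 0 < p)]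
    rw [coeff_Epart _ _ _ _ hp]
    have hck : c ≤ k := by nlinarith
    have h1 : p * (k - c) + p * c = p * k := by rw [← Nat.mul_add]; congr 1; omega
    have h2 : p * k + j - p * c = p * (k - c) + j := by omega
    rw [h2]

/-- If `p` is prime, `0 ≤ j ≤ p-1` and `0 ≤ k ≤ M-1 ≤ N-1`, then
`α(p,N,j,k) = α(p,M,j,k)`. -/
theorem alphaCoeff_stable (p : ℕ) (hp : Nat.Prime p) (j : ℕ) (hj : j ≤ p - 1)
    (k M N : ℕ) (hM : 1 ≤ M) (hk : k ≤ M - 1) (hMN : M ≤ N) :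
    alphaCoeff p N j k = alphaCoeff p M j k := by
  have hp2 : 2 ≤ p := hp.two_le
  have hjp : j < p := by omega
  set H : Polynomial ℤ := ∏ s ∈ Finset.Icc 1 M, (1 - Polynomial.X ^ s) with hH
  -- divisibility of the difference of F's
  have hdvd : Polynomial.expand ℤ p H ∣ Fpoly (p * N - 1) - Fpoly (p * M - 1) := by
    have hNM1 : p * M ≤ p * N := Nat.mul_le_mul_left p hMN
    have hM1 : 1 ≤ p * M := by nlinarith
    have hsub : Fpoly (p * N - 1) - Fpoly (p * M - 1)
        = ∑ n ∈ Finset.Ico (p * M) (p * N), ∏ i ∈ Finset.Icc 1 n, (1 - Polynomial.X ^ i) := by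
      unfold Fpoly
      rw [Finset.sum_Ico_eq_sub _ hNM1]
      rw [show p * N - 1 + 1 = p * N by omega, show p * M - 1 + 1 = p * M by omega]
    rw [hsub]
    apply Finset.dvd_sum
    intro n hn
    simp only [Finset.mem_Ico] at hn
    have hexp : Polynomial.expand ℤ p H = ∏ s ∈ Finset.Icc 1 M, (1 - Polynomial.X ^ (p * s)) := by
      rw [hH, map_prod]
      apply Finset.prod_congr rfl
      intro s _
      rw [map_sub, map_one, map_pow, Polynomial.expand_X, ← pow_mul, mul_comm]
    rw [hexp]
    have himg : ∏ s ∈ Finset.Icc 1 M, (1 - Polynomial.X ^ (p * s) : Polynomial ℤ)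
        = ∏ t ∈ (Finset.Icc 1 M).image (fun s => p * s), (1 - Polynomial.X ^ t) := by
      rw [Finset.prod_image]
      intro x _ y _ hxy
      exact Nat.eq_of_mul_eq_mul_left (by omega) hxy
    rw [himg]
    apply Finset.prod_dvd_prod_of_subset
    intro t ht
    simp only [Finset.mem_image, Finset.mem_Icc] at ht ⊢
    obtain ⟨s, ⟨hs1, hs2⟩, rfl⟩ := ht
    constructor
    · nlinarith
    · calc p * s ≤ p * M := Nat.mul_le_mul_left p hs2
        _ ≤ n := hn.1
  obtain ⟨T, hT⟩ := hdvd
  -- the difference of A's is H * Epart p j T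
  have key : Apoly p (p * N - 1) j - Apoly p (p * M - 1) j = H * Epart p j T := by
    ext l
    rw [Polynomial.coeff_sub, coeff_Apoly _ _ _ _ (by omega), coeff_Apoly _ _ _ _ (by omega),
      ← Polynomial.coeff_sub, hT, coeff_expand_mul p j (by omega) hjp]
  -- X^M divides H.comp (1 - X)
  have hXdvd : (Polynomial.X : Polynomial ℤ) ^ M ∣ H.comp (1 - Polynomial.X) := by
    rw [hH, Polynomial.prod_comp]
    have : (Polynomial.X : Polynomial ℤ) ^ M = ∏ _s ∈ Finset.Icc 1 M, (Polynomial.X : Polynomial ℤ) := by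
      rw [Finset.prod_const, Nat.card_Icc]
      norm_num
    rw [this]
    apply Finset.prod_dvd_prod_of_dvd
    intro s _
    rw [Polynomial.X_dvd_iff, Polynomial.coeff_zero_eq_eval_zero, Polynomial.eval_comp]
    simp
  -- conclude
  have hfinal : ((Apoly p (p * N - 1) j - Apoly p (p * M - 1) j).comp (1 - Polynomial.X)).coeff k = 0 := by
    rw [key, Polynomial.mul_comp]
    obtain ⟨R, hR⟩ := hXdvd
    rw [hR, mul_assoc, mul_comm, Polynomial.coeff_mul_X_pow']
    rw [if_neg (by omega)]
  unfold alphaCoeff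
  rw [Polynomial.sub_comp, Polynomial.coeff_sub] at hfinal
  omega
end

section
/- Let m be a nonnegative integer. For integers n ≥ 0 and k with 0 ≤ k ≤ n+1, the polynomials f(x,n,k,m) satisfy the recursion f(x,n+1,k,m) = −( (x + n − m) · f(x,n,k,m) + x · f(x,n,k−1,m) ), as an identity of polynomials in x. -/
/-- The generalized signless Stirling numbers of the first kind `s₁(n,j,m)`, defined by
`∑_{j=0}^n s₁(n,j,m) x^j = (x-m)(x-m+1)⋯(x-m+n-1)`. -/
noncomputable def s1gen (n j : ℕ) (m : ℕ) : ℤ :=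
  (∏ i ∈ Finset.range n,
    (Polynomial.X - Polynomial.C (m : ℤ) + Polynomial.C (i : ℤ))).coeff j

/-- The polynomial `f(x,n,k,m) = (-1)^n ∑_{j=k}^n C(j,k) s₁(n,j,m) x^j` for `0 ≤ k ≤ n`,
and `0` otherwise. -/
noncomputable def fpoly (n : ℕ) (k : ℤ) (m : ℕ) : Polynomial ℤ :=
  if 0 ≤ k ∧ k ≤ (n : ℤ) then
    Polynomial.C ((-1 : ℤ) ^ n) *
      ∑ j ∈ Finset.Icc k.toNat n,
        Polynomial.C ((j.choose k.toNat : ℤ) * s1gen n j m) * Polynomial.X ^ j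
  else 0

open Polynomial

noncomputable def Pn (n m : ℕ) : ℤ[X] :=
  ∏ i ∈ Finset.range n, (X - C (m : ℤ) + C (i : ℤ))

lemma Pn_natDegree_le (n m : ℕ) : (Pn n m).natDegree ≤ n := by
  refine le_trans (Polynomial.natDegree_prod_le _ _) ?_
  calc ∑ i ∈ Finset.range n, (X - C (m : ℤ) + C (i : ℤ)).natDegree
      ≤ ∑ _i ∈ Finset.range n, 1 := by
        refine Finset.sum_le_sum fun i _ => ?_
        refine le_trans (Polynomial.natDegree_add_le _ _) (max_le ?_ ?_)
        · exact le_trans (Polynomial.natDegree_sub_le _ _) (by simp)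
        · simp
    _ = n := by simp

lemma fpoly_eq (n k m : ℕ) :
    fpoly n (k : ℤ) m = C ((-1 : ℤ) ^ n) * (X ^ k * hasseDeriv k (Pn n m)) := by
  by_cases hkn : k ≤ n
  · rw [fpoly, if_pos ⟨Int.natCast_nonneg k, by exact_mod_cast hkn⟩]
    congr 1
    rw [Int.toNat_natCast]
    ext j
    rw [finset_sum_coeff]
    simp only [coeff_C_mul, coeff_X_pow, mul_ite, mul_one, mul_zero]
    rw [Finset.sum_ite_eq (Finset.Icc k n) j
      (fun j => (j.choose k : ℤ) * s1gen n j m)]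
    rw [show X ^ k * hasseDeriv k (Pn n m) = hasseDeriv k (Pn n m) * X ^ k from mul_comm _ _,
      coeff_mul_X_pow']
    by_cases hjk : k ≤ j
    · rw [if_pos hjk, hasseDeriv_coeff]
      rw [Nat.sub_add_cancel hjk]
      by_cases hjn : j ≤ n
      · rw [if_pos (Finset.mem_Icc.mpr ⟨hjk, hjn⟩)]
        rfl
      · rw [if_neg (fun h => hjn (Finset.mem_Icc.mp h).2)]
        have : (Pn n m).coeff j = 0 :=
          coeff_eq_zero_of_natDegree_lt (lt_of_le_of_lt (Pn_natDegree_le n m)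
            (lt_of_not_ge hjn))
        simp [s1gen, Pn] at this ⊢
        simp [this]
    · rw [if_neg hjk, if_neg (fun h => hjk (Finset.mem_Icc.mp h).1)]
  · rw [fpoly, if_neg (by push_neg; intro _; exact_mod_cast lt_of_not_ge hkn)]
    rw [hasseDeriv_eq_zero_of_lt_natDegree _ _ ?_]
    · simp
    · exact lt_of_le_of_lt (Pn_natDegree_le n m) (lt_of_not_ge hkn)

lemma key (n m k : ℕ) :
    hasseDeriv (k + 1) (Pn (n + 1) m) =
      hasseDeriv (k + 1) (Pn n m) * (X - C (m : ℤ) + C (n : ℤ)) +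
        hasseDeriv k (Pn n m) := by
  have hPn : Pn (n + 1) m = Pn n m * (X - C (m : ℤ) + C (n : ℤ)) := by
    rw [Pn, Finset.prod_range_succ]; rfl
  set L : ℤ[X] := X - C (m : ℤ) + C (n : ℤ) with hL
  have hL0 : hasseDeriv 0 L = L := hasseDeriv_zero' L
  have hL1 : hasseDeriv 1 L = 1 := by
    rw [hasseDeriv_one']
    simp [hL]
  have hLj : ∀ j, 2 ≤ j → hasseDeriv j L = 0 := by
    intro j hj
    rw [hL]
    rw [map_add, map_sub, hasseDeriv_X _ (by omega), hasseDeriv_C _ _ (by omega),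
      hasseDeriv_C _ _ (by omega)]
    simp
  rw [hPn, hasseDeriv_mul, Finset.Nat.sum_antidiagonal_eq_sum_range_succ_mk]
  rw [Finset.sum_range_succ, Finset.sum_range_succ]
  have hz : ∑ i ∈ Finset.range k, hasseDeriv i (Pn n m) * hasseDeriv (k + 1 - i) L = 0 := by
    refine Finset.sum_eq_zero fun i hi => ?_
    rw [hLj _ (by simp at hi; omega), mul_zero]
  rw [hz, zero_add]
  have h1 : k + 1 - k = 1 := by omega
  have h2 : k + 1 - (k + 1) = 0 := by omega
  rw [h1, h2, hL1, hL0, mul_one]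
  ring

/-- For `0 ≤ k ≤ n+1`, the recursion
`f(x,n+1,k,m) = -((x+n-m) f(x,n,k,m) + x f(x,n,k-1,m))` holds. -/
theorem fpoly_rec (m : ℕ) (n : ℕ) (k : ℤ) (hk : 0 ≤ k) (hk' : k ≤ (n : ℤ) + 1) :
    fpoly (n + 1) k m =
      -((Polynomial.X + Polynomial.C (n : ℤ) - Polynomial.C (m : ℤ)) * fpoly n k m
        + Polynomial.X * fpoly n (k - 1) m) := by
  lift k to ℕ using hk with k'
  have hPn : Pn (n + 1) m = Pn n m * (X - C (m : ℤ) + C (n : ℤ)) := by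
    rw [Pn, Finset.prod_range_succ]; rfl
  cases k' with
  | zero =>
    have h0 : fpoly n ((0 : ℕ) - 1 : ℤ) m = 0 := by
      rw [fpoly, if_neg]; push_neg; intro h; omega
    rw [h0, fpoly_eq, fpoly_eq]
    simp only [pow_zero, one_mul, hasseDeriv_zero', hPn, pow_succ, map_mul, C_neg, C_1]
    ring
  | succ k'' =>
    have hc : ((k'' + 1 : ℕ) : ℤ) - 1 = ((k'' : ℕ) : ℤ) := by push_cast; ring
    rw [hc, fpoly_eq, fpoly_eq, fpoly_eq, key n m k'']
    rw [pow_succ, map_mul, C_neg, C_1]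
    ring
end
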